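/- Let e : [0,∞) → ℝⁿ be absolutely continuous with derivative ė(t) = r(t) − α e(t) for α > 0, and let N_B : [0,∞) → ℝⁿ be continuously differentiable with ‖N_B(t)‖ ≤ γ₁ and ‖Ṅ_B(t)‖ ≤ γ₂ for all t. Define L(t) = r(t)ᵀ(N_B(t) − β sgn(e(t))) (with sgn applied componentwise) and P(t) = β Σᵢ|eᵢ(0)| − e(0)ᵀN_B(0) − ∫₀ᵗ L(s) ds. If β > γ₁ + γ₂/α, then P(t) ≥ 0 for all t ≥ 0. -/

import Mathlib

open scoped RealInnerProductSpace
open Set MeasureTheory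

private lemma abs_coord_le_norm {n : ℕ} (x : EuclideanSpace ℝ (Fin n)) (i : Fin n) :
    |x i| ≤ ‖x‖ := by
  rw [EuclideanSpace.norm_eq, ← Real.sqrt_sq_eq_abs]
  apply Real.sqrt_le_sqrt
  have := Finset.single_le_sum (f := fun j => ‖x j‖ ^ 2) (fun j _ => sq_nonneg _)
    (Finset.mem_univ i)
  simpa [Real.norm_eq_abs, sq_abs] using this

private lemma mul_sign_self (x : ℝ) : x * Real.sign x = |x| := by
  rcases lt_trichotomy x 0 with h | h | h
  · rw [Real.sign_of_neg h, abs_of_neg h]; ring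
  · simp [h]
  · rw [Real.sign_of_pos h, abs_of_pos h]; ring

private lemma countable_of_isolated' {S : Set ℝ}
    (h : ∀ x ∈ S, ∀ᶠ y in nhdsWithin x {x}ᶜ, y ∉ S) : S.Countable := by
  have key : ∀ x ∈ S, ∃ b ∈ TopologicalSpace.countableBasis ℝ, x ∈ b ∧ b ∩ S ⊆ {x} := by
    intro x hx
    obtain ⟨U, hUo, hxU, hU⟩ := mem_nhdsWithin.1 (h x hx)
    obtain ⟨b, hb, hxb, hbU⟩ :=
      (TopologicalSpace.isBasis_countableBasis ℝ).exists_subset_of_mem_open hxU hUo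
    refine ⟨b, hb, hxb, ?_⟩
    rintro y ⟨hyb, hyS⟩
    by_contra hyx
    exact hU ⟨hbU hyb, hyx⟩ hyS
  choose! f hf1 hf2 hf3 using key
  have hmt : Set.MapsTo f S (TopologicalSpace.countableBasis ℝ) := fun x hx => hf1 x hx
  refine hmt.countable_of_injOn ?_ (TopologicalSpace.countable_countableBasis ℝ)
  intro x hx y hy hxy
  have : y ∈ f x ∩ S := ⟨hxy ▸ hf2 y hy, hy⟩
  exact (hf3 x hx this).symm

private lemma abs_hasDerivWithinAt {f : ℝ → ℝ} {d x : ℝ} (hf : HasDerivAt f d x) :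
    HasDerivWithinAt (fun t => |f t|)
      (if f x = 0 then |d| else Real.sign (f x) * d) (Ioi x) x := by
  rcases eq_or_ne (f x) 0 with h0 | h0
  · rw [if_pos h0]
    rw [hasDerivWithinAt_iff_isLittleO]
    have H : (fun y => f y - f x - (y - x) • d) =o[nhdsWithin x (Ioi x)] fun y => y - x :=
      (hasDerivAt_iff_isLittleO.1 hf).mono nhdsWithin_le_nhds
    refine Asymptotics.IsBigO.trans_isLittleO ?_ H
    apply Asymptotics.IsBigO.of_bound 1
    filter_upwards [self_mem_nhdsWithin] with y (hy : x < y)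
    have h1 : (y - x) • |d| = |(y - x) * d| := by
      rw [smul_eq_mul, abs_mul, abs_of_pos (sub_pos.2 hy)]
    simp only [h0, abs_zero, sub_zero, h1, one_mul, smul_eq_mul, Real.norm_eq_abs]
    exact abs_abs_sub_abs_le_abs_sub _ _
  · rw [if_neg h0]
    rcases h0.lt_or_gt with hneg | hpos
    · have := (hasDerivAt_abs_neg hneg).comp x hf
      have h2 : Real.sign (f x) * d = -1 * d := by rw [Real.sign_of_neg hneg]
      rw [h2]
      exact this.hasDerivWithinAt
    · have := (hasDerivAt_abs_pos hpos).comp x hf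
      have h2 : Real.sign (f x) * d = 1 * d := by rw [Real.sign_of_pos hpos]
      rw [h2]
      exact this.hasDerivWithinAt

/-- RISE nonnegativity lemma: with r = ė + αe, ‖N_B‖ ≤ γ₁, ‖Ṅ_B‖ ≤ γ₂,
L = rᵀ(N_B − β sgn(e)) and
P(t) = β Σᵢ|eᵢ(0)| − e(0)ᵀN_B(0) − ∫₀ᵗ L, the gain condition
β > γ₁ + γ₂/α implies P(t) ≥ 0 for all t ≥ 0. -/
theorem stmt8 {n : ℕ} (α β γ₁ γ₂ : ℝ) (hα : 0 < α)
    (e r NB NB' : ℝ → EuclideanSpace ℝ (Fin n))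
    (he : ∀ t, HasDerivAt e (r t - α • e t) t)
    (hNB : ∀ t, HasDerivAt NB (NB' t) t)
    (hNB'cont : Continuous NB')
    (hNBbd : ∀ t, 0 ≤ t → ‖NB t‖ ≤ γ₁)
    (hNB'bd : ∀ t, 0 ≤ t → ‖NB' t‖ ≤ γ₂)
    (L P : ℝ → ℝ)
    (hL : ∀ t, L t = ∑ i, r t i * (NB t i - β * Real.sign (e t i)))
    (hP : ∀ t, P t = β * (∑ i, |e 0 i|) - (∑ i, e 0 i * NB 0 i) - ∫ s in (0:ℝ)..t, L s)
    (hgain : β > γ₁ + γ₂ / α) :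
    ∀ t, 0 ≤ t → 0 ≤ P t := by
  classical
  intro t ht
  -- basic positivity facts
  have hγ₁ : 0 ≤ γ₁ := le_trans (norm_nonneg _) (hNBbd 0 le_rfl)
  have hγ₂ : 0 ≤ γ₂ := le_trans (norm_nonneg _) (hNB'bd 0 le_rfl)
  have hβγ₁ : γ₁ ≤ β := by
    have : 0 ≤ γ₂ / α := div_nonneg hγ₂ hα.le
    linarith
  have hαβ : α * γ₁ + γ₂ ≤ α * β := by
    have h1 : γ₂ / α * α = γ₂ := div_mul_cancel₀ _ hα.ne'
    nlinarith
  -- coordinate derivatives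
  have hei : ∀ s (i : Fin n), HasDerivAt (fun u => e u i) ((r s - α • e s) i) s := by
    intro s i
    have := (EuclideanSpace.proj (𝕜 := ℝ) i).hasFDerivAt.comp_hasDerivAt s (he s)
    simpa [Function.comp_def] using this
  have hNBi : ∀ s (i : Fin n), HasDerivAt (fun u => NB u i) (NB' s i) s := by
    intro s i
    have := (EuclideanSpace.proj (𝕜 := ℝ) i).hasFDerivAt.comp_hasDerivAt s (hNB s)
    simpa [Function.comp_def] using this
  set d : ℝ → EuclideanSpace ℝ (Fin n) := fun s => r s - α • e s with hd
  -- the auxiliary function g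
  set g : ℝ → ℝ := fun s => β * (∑ i, |e s i|) - ∑ i, e s i * NB s i with hg
  -- pointwise nonnegativity of g
  have hgpos : ∀ s, 0 ≤ s → 0 ≤ g s := by
    intro s hs
    have h1 : ∑ i, e s i * NB s i ≤ γ₁ * ∑ i, |e s i| := by
      rw [Finset.mul_sum]
      apply Finset.sum_le_sum
      intro i _
      calc e s i * NB s i ≤ |e s i * NB s i| := le_abs_self _
        _ = |e s i| * |NB s i| := abs_mul _ _
        _ ≤ |e s i| * γ₁ := by
            apply mul_le_mul_of_nonneg_left _ (abs_nonneg _)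
            exact (abs_coord_le_norm _ i).trans (hNBbd s hs)
        _ = γ₁ * |e s i| := mul_comm _ _
    have h2 : γ₁ * ∑ i, |e s i| ≤ β * ∑ i, |e s i| := by
      apply mul_le_mul_of_nonneg_right hβγ₁
      exact Finset.sum_nonneg fun i _ => abs_nonneg _
    simp only [hg]
    linarith
  have hg0 : P t = g 0 - ∫ s in (0:ℝ)..t, L s := by rw [hP t]
  by_cases hint : IntervalIntegrable L volume 0 t
  · -- main case: integrate by parts via the right-derivative FTC inequality
    set D : ℝ → Fin n → ℝ := fun s i =>
      if e s i = 0 then |d s i| else Real.sign (e s i) * d s i with hD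
    set g' : ℝ → ℝ := fun s =>
      β * (∑ i, D s i) - ∑ i, (d s i * NB s i + e s i * NB' s i) with hg'
    have hderiv : ∀ s, HasDerivWithinAt g (g' s) (Ioi s) s := by
      intro s
      have h1 : ∀ i : Fin n, HasDerivWithinAt (fun u => |e u i|) (D s i) (Ioi s) s :=
        fun i => abs_hasDerivWithinAt (hei s i)
      have h2 : HasDerivWithinAt (fun u => ∑ i, |e u i|) (∑ i, D s i) (Ioi s) s :=
        HasDerivWithinAt.fun_sum fun i _ => h1 i
      have h3 : ∀ i : Fin n, HasDerivWithinAt (fun u => e u i * NB u i)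
          (d s i * NB s i + e s i * NB' s i) (Ioi s) s :=
        fun i => (hei s i).hasDerivWithinAt.mul (hNBi s i).hasDerivWithinAt
      exact (h2.const_mul β).sub (HasDerivWithinAt.fun_sum fun i _ => h3 i)
    have gcont : ContinuousOn g (Icc 0 t) := by
      apply Continuous.continuousOn
      apply Continuous.sub
      · apply continuous_const.mul
        apply continuous_finset_sum
        intro i _
        exact (continuous_iff_continuousAt.2 fun s => (hei s i).continuousAt).abs
      · apply continuous_finset_sum
        intro i _
        exact (continuous_iff_continuousAt.2 fun s => (hei s i).continuousAt).mul
          (continuous_iff_continuousAt.2 fun s => (hNBi s i).continuousAt)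
    -- the countable exceptional set
    set S : Set ℝ := {s | ∃ i, e s i = 0 ∧ d s i ≠ 0} with hS
    have hScount : S.Countable := by
      have hSeq : S = ⋃ i, {s | e s i = 0 ∧ d s i ≠ 0} := by
        ext s; simp [hS]
      rw [hSeq]
      apply Set.countable_iUnion
      intro i
      apply countable_of_isolated'
      intro x hx
      have hne := (hei x i).eventually_ne (c := e x i) hx.2
      filter_upwards [hne] with y hy hyS
      exact hy (by rw [hyS.1, hx.1])
    have hSnull : ∀ᵐ s ∂(volume : Measure ℝ), s ∉ S := by
      have : (volume : Measure ℝ) S = 0 := hScount.measure_zero _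
      exact (MeasureTheory.measure_eq_zero_iff_ae_notMem).1 this
    -- modified comparison function
    set φ : ℝ → ℝ := fun s => if s ∈ S then g' s else -L s with hφ
    have hφae : φ =ᵐ[(volume : Measure ℝ)] fun s => -L s := by
      filter_upwards [hSnull] with s hs
      simp [hφ, hs]
    have φint : IntegrableOn φ (Icc 0 t) := by
      have h1 : IntervalIntegrable (fun s => -L s) volume 0 t := hint.neg
      have h2 : IntegrableOn (fun s => -L s) (Ioc 0 t) := h1.1
      have h3 : IntegrableOn (fun s => -L s) (Icc 0 t) :=
        (integrableOn_Icc_iff_integrableOn_Ioc).2 h2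
      exact h3.congr (ae_restrict_of_ae hφae.symm)
    have hφg : ∀ x ∈ Ioo 0 t, g' x ≤ φ x := by
      intro x hx
      by_cases hxS : x ∈ S
      · simp [hφ, hxS]
      · simp only [hφ, if_neg hxS]
        -- on the complement of S, D x i = sign(e x i) * d x i
        have hDx : ∀ i, D x i = Real.sign (e x i) * d x i := by
          intro i
          by_cases h0 : e x i = 0
          · have hd0 : d x i = 0 := by
              by_contra hcon
              exact hxS ⟨i, h0, hcon⟩
            simp [hD, h0, hd0]
          · simp [hD, h0]
        have hri : ∀ i, r x i = d x i + α * e x i := by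
          intro i
          simp [hd]
        have key : ∀ i : Fin n,
            r x i * (NB x i - β * Real.sign (e x i))
              + (β * D x i - (d x i * NB x i + e x i * NB' x i)) ≤ 0 := by
          intro i
          rw [hDx i, hri i]
          have habs : e x i * Real.sign (e x i) = |e x i| := mul_sign_self _
          have hb1 : e x i * NB x i ≤ |e x i| * γ₁ := by
            calc e x i * NB x i ≤ |e x i * NB x i| := le_abs_self _
              _ = |e x i| * |NB x i| := abs_mul _ _
              _ ≤ |e x i| * γ₁ :=
                  mul_le_mul_of_nonneg_left
                    ((abs_coord_le_norm _ i).trans (hNBbd x hx.1.le)) (abs_nonneg _)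
          have hb2 : -(|e x i| * γ₂) ≤ e x i * NB' x i := by
            have : |e x i * NB' x i| ≤ |e x i| * γ₂ := by
              rw [abs_mul]
              exact mul_le_mul_of_nonneg_left
                ((abs_coord_le_norm _ i).trans (hNB'bd x hx.1.le)) (abs_nonneg _)
            linarith [neg_abs_le (e x i * NB' x i)]
          have hexp : (d x i + α * e x i) * (NB x i - β * Real.sign (e x i))
              + (β * (Real.sign (e x i) * d x i) - (d x i * NB x i + e x i * NB' x i))
              = α * (e x i * NB x i) - α * β * |e x i| - e x i * NB' x i := by
            rw [← habs]; ring
          rw [hexp]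
          nlinarith [abs_nonneg (e x i), hα.le]
        have hsum : L x + g' x ≤ 0 := by
          rw [hL x, hg']
          have : (∑ i, r x i * (NB x i - β * Real.sign (e x i)))
              + (β * (∑ i, D x i) - ∑ i, (d x i * NB x i + e x i * NB' x i))
              = ∑ i : Fin n, (r x i * (NB x i - β * Real.sign (e x i))
                + (β * D x i - (d x i * NB x i + e x i * NB' x i))) := by
            rw [Finset.mul_sum, ← Finset.sum_sub_distrib, ← Finset.sum_add_distrib]
          rw [this]
          exact Finset.sum_nonpos fun i _ => key i
        linarith
    have hmain := intervalIntegral.sub_le_integral_of_hasDeriv_right_of_le ht gcont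
      (fun x _ => hderiv x) φint hφg
    have hφeq : (∫ y in (0:ℝ)..t, φ y) = -∫ s in (0:ℝ)..t, L s := by
      rw [← intervalIntegral.integral_neg]
      apply intervalIntegral.integral_congr_ae
      filter_upwards [hSnull] with y hy _
      simp [hφ, hy]
    rw [hφeq] at hmain
    rw [hg0]
    have := hgpos t ht
    linarith
  · -- degenerate case: the integral is zero
    rw [hg0, intervalIntegral.integral_undef hint]
    have := hgpos 0 le_rfl
    linarith
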